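/- Let k be an odd positive integer, i a positive integer with gcd(i,k) = 1, and F = GaloisField 2 k. If β ∈ F satisfies β^((2^i+1)^2) = (β^(2^i) + β)^(2^i+1), then β = 0. -/

import Mathlib

theorem pow_inj {F : Type*} [Field F] [Fintype F] {n : ℕ} (hn : 0 < n)
    (h : Nat.Coprime (Fintype.card F - 1) n) :
    Function.Injective (fun x : F => x ^ n) := by
  intro a b hab
  simp only at hab
  rcases eq_or_ne a 0 with rfl | ha
  · rcases eq_or_ne b 0 with rfl | hb
    · rfl
    · exact absurd hab.symm (by simp [pow_ne_zero n hb, zero_pow hn.ne'])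
  rcases eq_or_ne b 0 with rfl | hb
  · exact absurd hab (by simp [pow_ne_zero n ha, zero_pow hn.ne'])
  classical
  have hcard : Nat.Coprime (Nat.card Fˣ) n := by
    rwa [Nat.card_eq_fintype_card, Fintype.card_units]
  have hu : (Units.mk0 a ha) ^ n = (Units.mk0 b hb) ^ n := by
    ext; simpa using hab
  have := (powCoprime hcard).injective hu
  simpa [Units.ext_iff] using this

theorem copr (k i : ℕ) (hk : Odd k) (hgcd : Nat.gcd i k = 1) :
    Nat.Coprime (2 ^ k - 1) (2 ^ i + 1) := by
  set d := Nat.gcd (2 ^ k - 1) (2 ^ i + 1) with hd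
  haveI : NeZero d := ⟨(Nat.gcd_pos_of_pos_right _ (by positivity)).ne'⟩
  have hd1 : d ∣ 2 ^ k - 1 := Nat.gcd_dvd_left _ _
  have hd2 : d ∣ 2 ^ i + 1 := Nat.gcd_dvd_right _ _
  have hd3 : d ∣ 2 ^ (2 * i) - 1 := by
    refine hd2.trans ?_
    have : 2 ^ (2 * i) - 1 = (2 ^ i + 1) * (2 ^ i - 1) := by
      calc 2 ^ (2 * i) - 1 = (2 ^ i) ^ 2 - 1 ^ 2 := by rw [two_mul, pow_add, sq, one_pow]
        _ = (2 ^ i + 1) * (2 ^ i - 1) := Nat.sq_sub_sq _ _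
    rw [this]; exact Dvd.intro _ rfl
  have key : ∀ m : ℕ, d ∣ 2 ^ m - 1 → (2 : ZMod d) ^ m = 1 := by
    intro m hm
    have h1 : 1 ≤ 2 ^ m := Nat.one_le_two_pow
    have h0 : ((2 ^ m - 1 : ℕ) : ZMod d) = 0 := (ZMod.natCast_eq_zero_iff _ _).2 hm
    have heq : (2 ^ m : ℕ) = (2 ^ m - 1) + 1 := (Nat.sub_add_cancel h1).symm
    calc (2 : ZMod d) ^ m = ((2 ^ m : ℕ) : ZMod d) := by push_cast; ring
      _ = ((2 ^ m - 1 : ℕ) : ZMod d) + 1 := by rw [heq]; push_cast; ring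
      _ = 1 := by rw [h0]; ring
  have e3 : (2 : ZMod d) ^ Nat.gcd (2 * i) k = 1 := pow_gcd_eq_one.2 ⟨key _ hd3, key _ hd1⟩
  have hg : Nat.gcd (2 * i) k = 1 := (Nat.coprime_two_left.2 hk).mul hgcd
  rw [hg, pow_one] at e3
  have h10 : ((1 : ℕ) : ZMod d) = 0 := by push_cast; linear_combination e3
  exact Nat.dvd_one.mp ((ZMod.natCast_eq_zero_iff _ _).1 h10)

/-- From the proof of Lemma 3.1: for `k` odd and `gcd(i,k) = 1`, if
`β^((2^i+1)^2) = (β^(2^i) + β)^(2^i+1)` in `GaloisField 2 k`, then `β = 0`. -/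
theorem butterfly_beta_eq_zero (k i : ℕ) (hk : Odd k) (hkpos : 0 < k)
    (hipos : 0 < i) (hgcd : Nat.gcd i k = 1) (β : GaloisField 2 k)
    (h : β ^ ((2 ^ i + 1) ^ 2) = (β ^ 2 ^ i + β) ^ (2 ^ i + 1)) : β = 0 := by
  haveI : Fintype (GaloisField 2 k) := Fintype.ofFinite _
  have hcard : Fintype.card (GaloisField 2 k) = 2 ^ k := by
    rw [← Nat.card_eq_fintype_card]; exact GaloisField.card 2 k hkpos.ne'
  have hcop : Nat.Coprime (Fintype.card (GaloisField 2 k) - 1) (2 ^ i + 1) := by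
    rw [hcard]; exact copr k i hk hgcd
  have hinj := pow_inj (F := GaloisField 2 k) (n := 2 ^ i + 1) (by positivity) hcop
  have step1 : β ^ (2 ^ i + 1) = β ^ 2 ^ i + β := by
    apply hinj
    simpa [← pow_mul, ← sq] using h
  have h2 : (2 : GaloisField 2 k) = 0 := by
    have := CharP.cast_eq_zero (GaloisField 2 k) 2
    exact_mod_cast this
  have step2 : (β + 1) ^ (2 ^ i + 1) = 1 := by
    calc (β + 1) ^ (2 ^ i + 1) = (β + 1) ^ 2 ^ i * (β + 1) := by rw [pow_add, pow_one]
      _ = (β ^ 2 ^ i + 1 ^ 2 ^ i) * (β + 1) := by rw [add_pow_char_pow]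
      _ = β ^ 2 ^ i * β + β ^ 2 ^ i + β + 1 := by ring
      _ = (β ^ 2 ^ i + β) + β ^ 2 ^ i + β + 1 := by rw [← pow_succ, step1]
      _ = 1 := by linear_combination (β ^ 2 ^ i + β) * h2
  have : β + 1 = 1 := by
    apply hinj
    simpa using step2
  have := congrArg (· + (-1 : GaloisField 2 k)) this
  simpa using this
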